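/- Let F be holomorphic on Δ⁺ with a continuous extension to Δ⁺ ∪ γ, suppose there exists C > 0 such that |Im F(t)| ≤ C·|Re F(t)| for every t ∈ γ, and suppose F is not identically zero on Δ⁺. Then the set {p ∈ Δ⁺ : Re F(p) ≠ 0} is an open dense subset of Δ⁺. -/

import Mathlib

/-- The open upper half disc `Δ⁺ = {ζ ∈ ℂ : |ζ| < 1, Im ζ > 0}`. -/
def upperHalfDisc : Set ℂ := {z : ℂ | ‖z‖ < 1 ∧ 0 < z.im}

/-- The interval `γ = (-1,1)` viewed as a subset of the real axis in `ℂ`. -/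
def realSegment : Set ℂ := {z : ℂ | z.im = 0 ∧ -1 < z.re ∧ z.re < 1}

lemma upperHalfDisc_eq : upperHalfDisc = Metric.ball (0:ℂ) 1 ∩ {z : ℂ | 0 < z.im} := by
  ext z
  simp [upperHalfDisc, Metric.mem_ball, Complex.dist_eq]

lemma isOpen_upperHalfDisc : IsOpen upperHalfDisc := by
  rw [upperHalfDisc_eq]
  exact Metric.isOpen_ball.inter (isOpen_lt continuous_const Complex.continuous_im)

lemma isPreconnected_upperHalfDisc : IsPreconnected upperHalfDisc := by
  rw [upperHalfDisc_eq]
  exact ((convex_ball (0:ℂ) 1).inter (convex_halfSpace_im_gt 0)).isPreconnected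

lemma zero_mem_closure_upperHalfDisc : (0:ℂ) ∈ closure upperHalfDisc := by
  have h : Filter.Tendsto (fun n : ℕ => (((((n:ℝ)+2)⁻¹ : ℝ)) : ℂ) * Complex.I)
      Filter.atTop (nhds 0) := by
    have h1 : Filter.Tendsto (fun n : ℕ => (((n:ℝ)+2)⁻¹ : ℝ)) Filter.atTop (nhds 0) := by
      apply Filter.Tendsto.comp tendsto_inv_atTop_zero
      exact Filter.tendsto_atTop_add_const_right _ 2 tendsto_natCast_atTop_atTop
    have h2 := (Complex.continuous_ofReal.tendsto 0).comp h1
    simpa using (h2.mul_const Complex.I)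
  refine mem_closure_of_tendsto h ?_
  filter_upwards with n
  have hpos : (0:ℝ) < ((n:ℝ)+2)⁻¹ := by positivity
  have hlt : ((n:ℝ)+2)⁻¹ < 1 := by
    rw [inv_lt_one_iff₀]; right; linarith [Nat.cast_nonneg (α := ℝ) n]
  constructor
  · rw [norm_mul, Complex.norm_I, Complex.norm_real, Real.norm_eq_abs, abs_of_pos hpos, mul_one]
    exact hlt
  · show (0:ℝ) < _; rw [Complex.mul_I_im, Complex.ofReal_re]; exact hpos

/-- **Observation 2.5, first part.**  If `F` is holomorphic on `Δ⁺`, continuous on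
`Δ⁺ ∪ γ`, maps `γ` into a cone `{|Im z| ≤ C|Re z|}`, and is not identically zero on `Δ⁺`,
then `{p ∈ Δ⁺ : Re F(p) ≠ 0}` is an open dense subset of `Δ⁺`. -/
theorem re_nonzero_open_dense_in_disc
    (F : ℂ → ℂ)
    (hF_hol : DifferentiableOn ℂ F upperHalfDisc)
    (hF_cont : ContinuousOn F (upperHalfDisc ∪ realSegment))
    (C : ℝ) (hC : 0 < C)
    (hcone : ∀ t ∈ realSegment, |(F t).im| ≤ C * |(F t).re|)
    (hF_ne : ¬ (∀ z ∈ upperHalfDisc, F z = 0)) :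
    IsOpen {p ∈ upperHalfDisc | (F p).re ≠ 0} ∧
    upperHalfDisc ⊆ closure {p ∈ upperHalfDisc | (F p).re ≠ 0} := by
  have hO := isOpen_upperHalfDisc
  have hcont : ContinuousOn (fun z => (F z).re) upperHalfDisc :=
    Complex.continuous_re.comp_continuousOn (hF_hol.continuousOn)
  constructor
  · have : {p ∈ upperHalfDisc | (F p).re ≠ 0}
        = upperHalfDisc ∩ (fun z => (F z).re) ⁻¹' {x | x ≠ 0} := by
      ext z; simp [Set.mem_setOf_eq]
    rw [this]
    exact hcont.isOpen_inter_preimage hO (isOpen_ne_fun continuous_id continuous_const)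
  · intro p hp
    by_contra hcl
    rw [mem_closure_iff] at hcl
    push_neg at hcl
    obtain ⟨V, hVopen, hpV, hVS⟩ := hcl
    set B := V ∩ upperHalfDisc with hB
    have hBopen : IsOpen B := hVopen.inter hO
    have hpB : p ∈ B := ⟨hpV, hp⟩
    have hBre : ∀ z ∈ B, (F z).re = 0 := by
      intro z hz
      by_contra hne
      exact (Set.eq_empty_iff_forall_notMem.mp hVS z) ⟨hz.1, hz.2, hne⟩
    have hA : AnalyticOnNhd ℂ F upperHalfDisc := hF_hol.analyticOnNhd hO
    rcases hA.is_constant_or_isOpen isPreconnected_upperHalfDisc with ⟨w, hw⟩ | hopen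
    · -- constant case
      have hwre : w.re = 0 := by
        rw [← hw p hp]; exact hBre p hpB
      -- F 0 = w via continuity
      have h0 : F 0 = w := by
        have hc : ContinuousWithinAt F upperHalfDisc 0 := by
          refine (hF_cont 0 (Or.inr ?_)).mono Set.subset_union_left
          exact ⟨rfl, by norm_num, by norm_num⟩
        have := hc.mem_closure_image zero_mem_closure_upperHalfDisc
        have himg : F '' upperHalfDisc ⊆ {w} := by
          rintro _ ⟨z, hz, rfl⟩; exact hw z hz
        have := (closure_minimal himg isClosed_singleton) this
        simpa using this
      have h0seg : (0:ℂ) ∈ realSegment := ⟨rfl, by norm_num, by norm_num⟩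
      have := hcone 0 h0seg
      rw [h0, hwre] at this
      simp at this
      have hwim : w.im = 0 := this
      have : w = 0 := Complex.ext (by simpa using hwre) (by simpa using hwim)
      exact hF_ne (fun z hz => by rw [hw z hz, this])
    · -- open map case
      have hBsub : B ⊆ upperHalfDisc := Set.inter_subset_right
      have hFBopen : IsOpen (F '' B) := hopen B hBsub hBopen
      obtain ⟨ε, hε, hball⟩ := Metric.isOpen_iff.mp hFBopen (F p) ⟨p, hpB, rfl⟩
      have hmem : F p + (ε/2 : ℝ) ∈ F '' B := by
        apply hball
        rw [Metric.mem_ball, dist_eq_norm]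
        simp only [add_sub_cancel_left]
        rw [Complex.norm_real, Real.norm_eq_abs, abs_of_pos (by linarith)]
        linarith
      obtain ⟨z, hz, hzeq⟩ := hmem
      have h1 := hBre z hz
      have h2 := hBre p hpB
      have : (F z).re = (F p).re + ε/2 := by
        rw [hzeq]; simp
      rw [h1, h2] at this
      linarith
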